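/- For all d ∈ ℝ and u ∈ (-1,1), the generating identity T⁺(d,u) = Σ_{n≥0} τ_{n+1}(u)·dⁿ holds, where the series converges for |d| sufficiently small (depending on u). -/

import Mathlib

noncomputable def Dop (p : Polynomial ℝ) : Polynomial ℝ :=
  (1 - Polynomial.X ^ 2) * Polynomial.derivative p

noncomputable def tau : ℕ → Polynomial ℝ
  | 0 => 1
  | 1 => Polynomial.X
  | (n + 2) => (((n : ℝ) + 1)⁻¹) • Dop (tau (n + 1))

open Real

lemma my_one_add_tanh_mul (a b : ℝ) :
    1 + Real.tanh a * Real.tanh b = Real.cosh (a + b) / (Real.cosh a * Real.cosh b) := by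
  rw [Real.tanh_eq_sinh_div_cosh, Real.tanh_eq_sinh_div_cosh, Real.cosh_add]
  field_simp [(Real.cosh_pos a).ne', (Real.cosh_pos b).ne']

lemma my_tanh_add (a b : ℝ) :
    Real.tanh (a + b) = (Real.tanh a + Real.tanh b) / (1 + Real.tanh a * Real.tanh b) := by
  rw [my_one_add_tanh_mul, Real.tanh_eq_sinh_div_cosh, Real.tanh_eq_sinh_div_cosh,
    Real.tanh_eq_sinh_div_cosh, Real.sinh_add, Real.cosh_add]
  have h1 := (Real.cosh_pos a).ne'
  have h2 := (Real.cosh_pos b).ne'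
  have h3 := (Real.cosh_pos (a + b)).ne'
  rw [Real.cosh_add] at h3
  field_simp

lemma my_tanh_eq (x : ℝ) :
    Real.tanh x = (Real.exp (2 * x) - 1) / (Real.exp (2 * x) + 1) := by
  have h1 : Real.exp x > 0 := Real.exp_pos x
  have h2 : Real.exp (2 * x) = Real.exp x * Real.exp x := by
    rw [two_mul, Real.exp_add]
  rw [Real.tanh_eq_sinh_div_cosh, Real.sinh_eq, Real.cosh_eq, h2, Real.exp_neg]
  have hx : Real.exp x ≠ 0 := h1.ne'
  have hs : Real.exp x + (Real.exp x)⁻¹ ≠ 0 := by positivity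
  have ht : Real.exp x * Real.exp x + 1 ≠ 0 := by positivity
  field_simp

lemma my_exists_tanh (u : ℝ) (hu : u ∈ Set.Ioo (-1 : ℝ) 1) :
    ∃ a : ℝ, Real.tanh a = u := by
  obtain ⟨h1, h2⟩ := hu
  refine ⟨Real.log ((1 + u) / (1 - u)) / 2, ?_⟩
  have hpos : 0 < (1 + u) / (1 - u) := by
    apply div_pos <;> linarith
  rw [my_tanh_eq, mul_div_cancel₀ _ (two_ne_zero), Real.exp_log hpos]
  have h3 : (1 : ℝ) - u ≠ 0 := by linarith
  field_simp
  ring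

lemma my_hasDerivAt_tanh (x : ℝ) :
    HasDerivAt Real.tanh (1 - Real.tanh x ^ 2) x := by
  have h := (Real.hasDerivAt_sinh x).div (Real.hasDerivAt_cosh x) (Real.cosh_pos x).ne'
  have heq : (Real.cosh x * Real.cosh x - Real.sinh x * Real.sinh x) / Real.cosh x ^ 2
      = 1 - Real.tanh x ^ 2 := by
    have h1 := (Real.cosh_pos x).ne'
    have h2 := Real.cosh_sq_sub_sinh_sq x
    rw [Real.tanh_eq_sinh_div_cosh]
    field_simp
  rw [heq] at h
  exact h.congr_of_eventuallyEq
    (Filter.Eventually.of_forall fun y => Real.tanh_eq_sinh_div_cosh y)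

lemma my_analyticAt_tanh (x : ℝ) : AnalyticAt ℝ Real.tanh x := by
  have hexp : AnalyticAt ℝ Real.exp x := analyticAt_rexp
  have hexpneg : AnalyticAt ℝ (fun y => Real.exp (-y)) x :=
    analyticAt_rexp.comp (analyticAt_id.neg)
  have hs : AnalyticAt ℝ Real.sinh x := by
    have : Real.sinh = fun y => (Real.exp y - Real.exp (-y)) / 2 := by
      funext y; rw [Real.sinh_eq]
    rw [this]
    exact (hexp.sub hexpneg).div analyticAt_const two_ne_zero
  have hc : AnalyticAt ℝ Real.cosh x := by
    have : Real.cosh = fun y => (Real.exp y + Real.exp (-y)) / 2 := by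
      funext y; rw [Real.cosh_eq]
    rw [this]
    exact (hexp.add hexpneg).div analyticAt_const two_ne_zero
  have : Real.tanh = fun y => Real.sinh y / Real.cosh y := by
    funext y; rw [Real.tanh_eq_sinh_div_cosh]
  rw [this]
  exact hs.div hc (Real.cosh_pos x).ne'

lemma my_deriv_poly_tanh (a : ℝ) (q : Polynomial ℝ) (d : ℝ) :
    HasDerivAt (fun d => q.eval (Real.tanh (a + d)))
      ((Dop q).eval (Real.tanh (a + d))) d := by
  have h1 : HasDerivAt (fun d : ℝ => a + d) 1 d := (hasDerivAt_id d).const_add a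
  have h2 := (my_hasDerivAt_tanh (a + d)).comp d h1
  have h3 := (q.hasDerivAt (Real.tanh (a + d))).comp d h2
  refine HasDerivAt.congr_deriv h3 ?_
  simp [Dop]
  ring

lemma my_iteratedDeriv (a : ℝ) (n : ℕ) :
    iteratedDeriv n (fun d => Real.tanh (a + d))
      = fun d => (n.factorial : ℝ) * (tau (n + 1)).eval (Real.tanh (a + d)) := by
  induction n with
  | zero =>
    simp [iteratedDeriv_zero, tau]
  | succ n ih =>
    rw [iteratedDeriv_succ, ih]
    funext d
    have h : HasDerivAt (fun d => (n.factorial : ℝ) * (tau (n + 1)).eval (Real.tanh (a + d)))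
        ((n.factorial : ℝ) * (Dop (tau (n + 1))).eval (Real.tanh (a + d))) d :=
      (my_deriv_poly_tanh a (tau (n + 1)) d).const_mul _
    rw [h.deriv]
    show (n.factorial : ℝ) * (Dop (tau (n + 1))).eval (Real.tanh (a + d))
      = (((n+1).factorial) : ℝ) * (tau (n + 2)).eval (Real.tanh (a + d))
    have : tau (n + 2) = (((n : ℝ) + 1)⁻¹) • Dop (tau (n + 1)) := rfl
    rw [this, Polynomial.eval_smul, Nat.factorial_succ]
    push_cast
    have hne : ((n : ℝ) + 1) ≠ 0 := by positivity
    field_simp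
    rw [smul_eq_mul]
    field_simp

theorem Tplus_generating_series (u : ℝ) (hu : u ∈ Set.Ioo (-1 : ℝ) 1) :
    ∃ r : ℝ, 0 < r ∧ ∀ d : ℝ, |d| < r →
      HasSum (fun n : ℕ => (tau (n + 1)).eval u * d ^ n)
        ((u + Real.tanh d) / (1 + u * Real.tanh d)) := by
  obtain ⟨a, ha⟩ := my_exists_tanh u hu
  set f : ℝ → ℝ := fun d => Real.tanh (a + d) with hf
  have hana : AnalyticAt ℝ f 0 :=
    (my_analyticAt_tanh (a + 0)).comp (analyticAt_const.add analyticAt_id)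
  obtain ⟨p, hp⟩ := hana
  obtain ⟨R, hR⟩ := hp
  obtain ⟨c, hc0, hcR⟩ := ENNReal.lt_iff_exists_nnreal_btwn.mp hR.r_pos
  refine ⟨c, by exact_mod_cast hc0, fun d hd => ?_⟩
  have hdball : d ∈ Metric.eball (0 : ℝ) R := by
    refine lt_trans ?_ hcR
    rw [edist_dist, dist_zero_right, Real.norm_eq_abs, ENNReal.ofReal_lt_coe_iff (abs_nonneg d)]
    exact hd
  have hsum := hR.hasSum_iteratedFDeriv hdball
  have hterm : ∀ n : ℕ, ((n.factorial : ℝ)⁻¹ • iteratedFDeriv ℝ n f 0 fun _ => d)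
      = (tau (n + 1)).eval u * d ^ n := by
    intro n
    have h1 : (iteratedFDeriv ℝ n f 0 fun _ => d)
        = d ^ n * iteratedDeriv n f 0 := by
      rw [iteratedDeriv_eq_iteratedFDeriv]
      have := (iteratedFDeriv ℝ n f 0).map_smul_univ (fun _ : Fin n => d) (fun _ => 1)
      simpa [Finset.prod_const, smul_eq_mul] using this
    rw [h1, my_iteratedDeriv a n]
    simp only [add_zero, ha, smul_eq_mul]
    have hne : ((n.factorial : ℝ)) ≠ 0 := by positivity
    field_simp
  have hval : f (0 + d) = (u + Real.tanh d) / (1 + u * Real.tanh d) := by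
    simp only [hf, zero_add]
    rw [my_tanh_add, ha]
  rw [hval] at hsum
  have hfun2 : (fun n : ℕ => (n.factorial : ℝ)⁻¹ • iteratedFDeriv ℝ n f 0 fun _ => d)
      = fun n : ℕ => (tau (n + 1)).eval u * d ^ n := funext hterm
  rw [hfun2] at hsum
  exact hsum
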